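/- Let A = A_1 ⊔ A_2 ⊔ A_3 be a (3,4)-net in P^2(C) all of whose multiple points have multiplicity 2 or 3. If two of the three classes each contain three concurrent lines (a triple point inside the class), then the third class also contains three concurrent lines. -/

import Mathlib

open scoped Classical

noncomputable section

/-- The complex projective plane `P²(ℂ)`. -/
abbrev ProjPlane : Type := Projectivization ℂ (Fin 3 → ℂ)

/-- A subset of `P²(ℂ)` is a projective line if it is the zero locus of a nonzero
linear form. -/
def IsProjLine (S : Set ProjPlane) : Prop :=
  ∃ f : (Fin 3 → ℂ) →ₗ[ℂ] ℂ, f ≠ 0 ∧ S = {p : ProjPlane | f p.rep = 0}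

/-- The lines of the arrangement `A` passing through the point `p`. -/
def linesThrough (A : Finset (Set ProjPlane)) (p : ProjPlane) : Finset (Set ProjPlane) :=
  A.filter fun L => p ∈ L

/-- The multiplicity of a point `p` with respect to the arrangement `A`. -/
def mult (A : Finset (Set ProjPlane)) (p : ProjPlane) : ℕ :=
  (linesThrough A p).card

/-- `p` is a multiple point of the arrangement `A` (at least two lines pass through it). -/
def IsMultPoint (A : Finset (Set ProjPlane)) (p : ProjPlane) : Prop :=
  2 ≤ mult A p

/-- A `q`-cocycle of the line arrangement `A`: for every multiple point `p`,
if `q` divides the multiplicity then the values of `η` on the lines through `p` sum to `0`,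
and otherwise `η` is constant on the lines through `p`. -/
def IsCocycle (q : ℕ) (A : Finset (Set ProjPlane)) (η : Set ProjPlane → ZMod q) : Prop :=
  ∀ p : ProjPlane, IsMultPoint A p →
    ((q ∣ mult A p → ∑ L ∈ linesThrough A p, η L = 0) ∧
     (¬ q ∣ mult A p → ∀ L ∈ linesThrough A p, ∀ K ∈ linesThrough A p, η L = η K))

/-- A function on lines is non-constant on the arrangement `A`. -/
def NonConstant {α : Type*} (A : Finset (Set ProjPlane)) (η : Set ProjPlane → α) : Prop :=
  ∃ L ∈ A, ∃ K ∈ A, η L ≠ η K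

/-- A `(k,q)`-net structure on the line arrangement `A`, with classes `C 0, …, C (k-1)`:
the classes partition `A` into `k` classes of `q` lines each, and whenever two lines from
different classes meet, their intersection point lies on exactly one line of each class. -/
def IsNet (k q : ℕ) (A : Finset (Set ProjPlane)) (C : Fin k → Finset (Set ProjPlane)) : Prop :=
  (∀ L ∈ A, IsProjLine L) ∧
  A.card = k * q ∧
  (∀ i, (C i).card = q) ∧
  (∀ i j, i ≠ j → Disjoint (C i) (C j)) ∧
  (∀ i, C i ⊆ A) ∧
  (∀ L ∈ A, ∃ i, L ∈ C i) ∧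
  (∀ i j, i ≠ j → ∀ L ∈ C i, ∀ K ∈ C j, ∀ p : ProjPlane, p ∈ L → p ∈ K →
    ∀ m : Fin k, ∃! N, N ∈ C m ∧ p ∈ N)

/-- Lattice isomorphism of two line arrangements: a bijection between the lines such that
a subfamily of lines has a common point iff the image subfamily has a common point. -/
def LatticeIso (A B : Finset (Set ProjPlane)) : Prop :=
  ∃ φ : Set ProjPlane → Set ProjPlane, Set.BijOn φ ↑A ↑B ∧
    ∀ S : Finset (Set ProjPlane), S ⊆ A →
      ((∃ p : ProjPlane, ∀ L ∈ S, p ∈ L) ↔ ∃ p : ProjPlane, ∀ L ∈ S, p ∈ φ L)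

/-- The projective line with homogeneous equation `a·x + b·y + c·z = 0`. -/
def lineOf (a b c : ℂ) : Set ProjPlane :=
  {p : ProjPlane | a * p.rep 0 + b * p.rep 1 + c * p.rep 2 = 0}

/-- `S` contains three distinct concurrent lines. -/
def HasConcurrentTriple (S : Finset (Set ProjPlane)) : Prop :=
  ∃ L ∈ S, ∃ M ∈ S, ∃ N ∈ S, L ≠ M ∧ L ≠ N ∧ M ≠ N ∧
    ∃ p : ProjPlane, p ∈ L ∧ p ∈ M ∧ p ∈ N

namespace S6
abbrev V3 : Type := Fin 3 → ℂ
def cr (u v : V3) : V3 := ![u 1 * v 2 - u 2 * v 1, u 2 * v 0 - u 0 * v 2, u 0 * v 1 - u 1 * v 0]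
def dt (u v : V3) : ℂ := u 0 * v 0 + u 1 * v 1 + u 2 * v 2
def d3 (x y z : V3) : ℂ := dt x (cr y z)

lemma V3.ext' {u v : V3} (h0 : u 0 = v 0) (h1 : u 1 = v 1) (h2 : u 2 = v 2) : u = v := by
  funext i; fin_cases i <;> assumption

lemma V3.ne_iff {u : V3} : u ≠ 0 ↔ u 0 ≠ 0 ∨ u 1 ≠ 0 ∨ u 2 ≠ 0 := by
  constructor
  · intro h
    by_contra hc
    push_neg at hc
    exact h (V3.ext' hc.1 hc.2.1 hc.2.2)
  · rintro (h|h|h) rfl <;> simp at h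

@[simp] lemma cr0 (u v : V3) : cr u v 0 = u 1 * v 2 - u 2 * v 1 := rfl
@[simp] lemma cr1 (u v : V3) : cr u v 1 = u 2 * v 0 - u 0 * v 2 := rfl
@[simp] lemma cr2 (u v : V3) : cr u v 2 = u 0 * v 1 - u 1 * v 0 := rfl

lemma dt_comm (u v : V3) : dt u v = dt v u := by simp [dt]; ring

lemma dt_smul (a : ℂ) (u v : V3) : dt u (a • v) = a * dt u v := by simp [dt]; ring

lemma cr_smul_left (a : ℂ) (u v : V3) : cr (a • u) v = a • cr u v := by
  apply V3.ext' <;> simp <;> ring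

lemma cr_smul_right (a : ℂ) (u v : V3) : cr u (a • v) = a • cr u v := by
  apply V3.ext' <;> simp <;> ring

lemma dt_self_cr (u v : V3) : dt u (cr u v) = 0 := by simp [dt]; ring
lemma dt_self_cr' (u v : V3) : dt v (cr u v) = 0 := by simp [dt]; ring

lemma grassmann (x u w : V3) : cr x (cr u w) = dt x w • u - dt x u • w := by
  apply V3.ext' <;> simp [dt] <;> ring

lemma d3_cyc (x y z : V3) : d3 x y z = d3 z x y := by simp [d3, dt]; ring

lemma d3_smul₁ (a : ℂ) (x y z : V3) : d3 (a • x) y z = a * d3 x y z := by simp [d3, dt]; ring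
lemma d3_smul₂ (a : ℂ) (x y z : V3) : d3 x (a • y) z = a * d3 x y z := by simp [d3, dt]; ring
lemma d3_smul₃ (a : ℂ) (x y z : V3) : d3 x y (a • z) = a * d3 x y z := by simp [d3, dt]; ring


lemma eq_smul_of_cr_eq_zero {x y : V3} (h : cr x y = 0) (hy : y ≠ 0) : ∃ t : ℂ, x = t • y := by
  have h0 := congrFun h 0
  have h1 := congrFun h 1
  have h2 := congrFun h 2
  simp at h0 h1 h2
  rcases V3.ne_iff.mp hy with hc | hc | hc
  · refine ⟨x 0 / y 0, V3.ext' ?_ ?_ ?_⟩ <;> simp <;> field_simp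
    · linear_combination -h2
    · linear_combination h1
  · refine ⟨x 1 / y 1, V3.ext' ?_ ?_ ?_⟩ <;> simp <;> field_simp
    · linear_combination h2
    · linear_combination -h0
  · refine ⟨x 2 / y 2, V3.ext' ?_ ?_ ?_⟩ <;> simp <;> field_simp
    · linear_combination -h1
    · linear_combination h0


/-- If three vectors are all orthogonal to a common nonzero vector, their triple product vanishes. -/
lemma d3_eq_zero_of_common {x y z v : V3} (hv : v ≠ 0)
    (hx : dt x v = 0) (hy : dt y v = 0) (hz : dt z v = 0) : d3 x y z = 0 := by
  by_cases hc : cr y z = 0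
  · have c0 := congrFun hc 0
    have c1 := congrFun hc 1
    have c2 := congrFun hc 2
    simp at c0 c1 c2
    simp [d3, dt]
    linear_combination x 0 * c0 + x 1 * c1 + x 2 * c2
  · have hg : cr v (cr y z) = 0 := by
      rw [grassmann, dt_comm v z, dt_comm v y, hy, hz]; simp
    obtain ⟨t, ht⟩ := eq_smul_of_cr_eq_zero hg hc
    have htne : t ≠ 0 := by rintro rfl; simp at ht; exact hv ht
    have : dt x v = t * d3 x y z := by rw [ht, dt_smul]; rfl
    rw [hx] at this
    exact (mul_eq_zero.mp this.symm).resolve_left htne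

/-- A vector orthogonal to two vectors with nonvanishing cross product is in their span. -/
lemma mem_span_of_perp {x y z : V3} (hc : cr x y ≠ 0) (hz : dt z (cr x y) = 0) :
    ∃ a b : ℂ, z = a • x + b • y := by
  have hz0 : z 0 * (x 1 * y 2 - x 2 * y 1) + z 1 * (x 2 * y 0 - x 0 * y 2)
      + z 2 * (x 0 * y 1 - x 1 * y 0) = 0 := by
    have := hz; simp [dt] at this; linear_combination this
  rcases V3.ne_iff.mp hc with hk | hk | hk
  · simp only [cr0] at hk
    refine ⟨(z 1 * y 2 - z 2 * y 1) / (x 1 * y 2 - x 2 * y 1),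
           (x 1 * z 2 - x 2 * z 1) / (x 1 * y 2 - x 2 * y 1), V3.ext' ?_ ?_ ?_⟩ <;>
      simp <;> field_simp <;> rw [eq_div_iff (by intro h; apply hk; linear_combination h)]
    · linear_combination hz0
    · ring
    · ring
  · simp only [cr1] at hk
    refine ⟨(z 2 * y 0 - z 0 * y 2) / (x 2 * y 0 - x 0 * y 2),
           (x 2 * z 0 - x 0 * z 2) / (x 2 * y 0 - x 0 * y 2), V3.ext' ?_ ?_ ?_⟩ <;>
      simp <;> field_simp <;> rw [eq_div_iff (by intro h; apply hk; linear_combination h)]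
    · ring
    · linear_combination hz0
    · ring
  · simp only [cr2] at hk
    refine ⟨(z 0 * y 1 - z 1 * y 0) / (x 0 * y 1 - x 1 * y 0),
           (x 0 * z 1 - x 1 * z 0) / (x 0 * y 1 - x 1 * y 0), V3.ext' ?_ ?_ ?_⟩ <;>
      simp <;> field_simp <;> rw [eq_div_iff (by intro h; apply hk; linear_combination h)]
    · ring
    · ring
    · linear_combination hz0

/-- Every nonzero vector has a nonzero orthogonal vector. -/
lemma exists_perp {u : V3} : ∃ v : V3, v ≠ 0 ∧ dt u v = 0 := by
  by_cases h : u 0 = 0 ∧ u 1 = 0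
  · exact ⟨![1, 0, 0], by simp [V3.ne_iff], by simp [dt, h.1]⟩
  · refine ⟨![-u 1, u 0, 0], ?_, by simp [dt]; ring⟩
    rw [V3.ne_iff]
    push_neg at h
    by_cases h0 : u 0 = 0
    · exact Or.inl (by simpa [h0] using h h0)
    · exact Or.inr (Or.inl (by simpa using h0))


/-- Pappus's theorem, in triple-product form. -/
lemma pappus {l1 l2 l3 k1 k2 k3 : V3} (hl12 : cr l1 l2 ≠ 0) (hk12 : cr k1 k2 ≠ 0)
    (hl : d3 l1 l2 l3 = 0) (hk : d3 k1 k2 k3 = 0) :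
    d3 (cr (cr l2 k3) (cr l3 k2)) (cr (cr l1 k3) (cr l3 k1)) (cr (cr l1 k2) (cr l2 k1)) = 0 := by
  have hl' : dt l3 (cr l1 l2) = 0 := by
    simp only [d3, dt, cr0, cr1, cr2] at hl ⊢; linear_combination hl
  have hk' : dt k3 (cr k1 k2) = 0 := by
    simp only [d3, dt, cr0, cr1, cr2] at hk ⊢; linear_combination hk
  obtain ⟨a, b, hab⟩ := mem_span_of_perp hl12 hl'
  obtain ⟨c, d, hcd⟩ := mem_span_of_perp hk12 hk'
  subst hab hcd
  simp only [d3, dt, cr0, cr1, cr2, Pi.add_apply, Pi.smul_apply, smul_eq_mul]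
  ring

lemma dt_smul_left (a : ℂ) (u v : V3) : dt (a • u) v = a * dt u v := by simp [dt]; ring

lemma cr_self (u : V3) : cr u u = 0 := by apply V3.ext' <;> simp <;> ring

lemma eq_smul_cr_of_perp {u w x : V3} (hc : cr u w ≠ 0) (h1 : dt x u = 0) (h2 : dt x w = 0) :
    ∃ s : ℂ, x = s • cr u w := by
  refine eq_smul_of_cr_eq_zero ?_ hc
  rw [grassmann, h1, h2]; simp

/-- The coefficient vector of a projective line. -/
def lvec (L : Set ProjPlane) (h : IsProjLine L) : V3 := fun i => h.choose (Pi.single i 1)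

lemma dt_lvec {L : Set ProjPlane} (h : IsProjLine L) (x : V3) : dt (lvec L h) x = h.choose x := by
  have hx : x = x 0 • (Pi.single 0 1 : V3) + x 1 • (Pi.single 1 1 : V3)
      + x 2 • (Pi.single 2 1 : V3) := by
    funext i; fin_cases i <;> simp
  conv_rhs => rw [hx]
  simp only [map_add, map_smul, smul_eq_mul]
  simp [dt, lvec]; ring

lemma lvec_ne {L : Set ProjPlane} (h : IsProjLine L) : lvec L h ≠ 0 := by
  obtain ⟨x, hx⟩ := DFunLike.ne_iff.mp h.choose_spec.1
  intro hc
  apply hx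
  have := dt_lvec h x
  rw [hc] at this
  simpa [dt] using this.symm

lemma mem_line_iff {L : Set ProjPlane} (h : IsProjLine L) (p : ProjPlane) :
    p ∈ L ↔ dt (lvec L h) p.rep = 0 := by
  rw [dt_lvec]
  conv_lhs => rw [h.choose_spec.2]
  exact Iff.rfl

lemma mem_line_mk {L : Set ProjPlane} (h : IsProjLine L) {v : V3} (hv : v ≠ 0)
    (hdt : dt (lvec L h) v = 0) : Projectivization.mk ℂ v hv ∈ L := by
  rw [mem_line_iff h]
  set p := Projectivization.mk ℂ v hv with hp
  have hrep : Projectivization.mk ℂ p.rep p.rep_nonzero = Projectivization.mk ℂ v hv :=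
    by rw [← hp]; exact p.mk_rep
  obtain ⟨a, ha⟩ := (Projectivization.mk_eq_mk_iff ℂ p.rep v p.rep_nonzero hv).mp hrep
  rw [← ha, Units.smul_def, dt_smul, hdt, mul_zero]

lemma cr_rep_ne {p q : ProjPlane} (h : p ≠ q) : cr p.rep q.rep ≠ 0 := by
  intro hc
  apply h
  obtain ⟨t, ht⟩ := eq_smul_of_cr_eq_zero hc q.rep_nonzero
  have htne : t ≠ 0 := by rintro rfl; simp at ht; exact p.rep_nonzero ht
  rw [← p.mk_rep, ← q.mk_rep]
  exact (Projectivization.mk_eq_mk_iff ℂ p.rep q.rep p.rep_nonzero q.rep_nonzero).mpr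
    ⟨Units.mk0 t htne, by simp [Units.smul_def, ← ht]⟩

lemma cr_lvec_ne {L K : Set ProjPlane} (hL : IsProjLine L) (hK : IsProjLine K) (hne : L ≠ K) :
    cr (lvec L hL) (lvec K hK) ≠ 0 := by
  intro hc
  apply hne
  obtain ⟨t, ht⟩ := eq_smul_of_cr_eq_zero hc (lvec_ne hK)
  have htne : t ≠ 0 := by rintro rfl; simp at ht; exact lvec_ne hL ht
  ext p
  rw [mem_line_iff hL, mem_line_iff hK, ht, dt_smul_left]
  exact ⟨fun h => by
    rcases mul_eq_zero.mp h with h | h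
    · exact absurd h htne
    · exact h, fun h => by rw [h, mul_zero]⟩

/-- Two distinct projective lines meet in at most one point. -/
lemma point_unique {L K : Set ProjPlane} (hL : IsProjLine L) (hK : IsProjLine K) (hne : L ≠ K)
    {p q : ProjPlane} (hpL : p ∈ L) (hpK : p ∈ K) (hqL : q ∈ L) (hqK : q ∈ K) : p = q := by
  by_contra hpq
  have hc := cr_rep_ne hpq
  obtain ⟨s, hs⟩ := eq_smul_cr_of_perp hc
    ((mem_line_iff hL p).mp hpL) ((mem_line_iff hL q).mp hqL)
  obtain ⟨s', hs'⟩ := eq_smul_cr_of_perp hc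
    ((mem_line_iff hK p).mp hpK) ((mem_line_iff hK q).mp hqK)
  have hsne : s ≠ 0 := by rintro rfl; simp at hs; exact lvec_ne hL hs
  have hs'ne : s' ≠ 0 := by rintro rfl; simp at hs'; exact lvec_ne hK hs'
  apply cr_lvec_ne hL hK hne
  rw [hs, hs', cr_smul_left, cr_smul_right, cr_self]
  simp

/-- Any two projective lines meet. -/
lemma exists_common_point {L K : Set ProjPlane} (hL : IsProjLine L) (hK : IsProjLine K) :
    ∃ p : ProjPlane, p ∈ L ∧ p ∈ K := by
  by_cases hc : cr (lvec L hL) (lvec K hK) = 0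
  · obtain ⟨t, ht⟩ := eq_smul_of_cr_eq_zero hc (lvec_ne hK)
    obtain ⟨v, hv, hdt⟩ := exists_perp (u := lvec K hK)
    exact ⟨Projectivization.mk ℂ v hv,
      mem_line_mk hL hv (by rw [ht, dt_smul_left, hdt, mul_zero]),
      mem_line_mk hK hv hdt⟩
  · exact ⟨Projectivization.mk ℂ _ hc,
      mem_line_mk hL _ (dt_self_cr _ _), mem_line_mk hK _ (dt_self_cr' _ _)⟩

/-- The representative of a point on two lines with independent coefficient vectors
is a multiple of the cross product. -/
lemma rep_eq_smul_cr {L K : Set ProjPlane} (hL : IsProjLine L) (hK : IsProjLine K)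
    (hc : cr (lvec L hL) (lvec K hK) ≠ 0) {p : ProjPlane} (hpL : p ∈ L) (hpK : p ∈ K) :
    ∃ s : ℂ, s ≠ 0 ∧ p.rep = s • cr (lvec L hL) (lvec K hK) := by
  obtain ⟨s, hs⟩ := eq_smul_cr_of_perp hc
    (by rw [dt_comm]; exact (mem_line_iff hL p).mp hpL)
    (by rw [dt_comm]; exact (mem_line_iff hK p).mp hpK)
  exact ⟨s, by rintro rfl; simp at hs; exact p.rep_nonzero hs, hs⟩

lemma d3_lvec_zero {L M N : Set ProjPlane} (hL : IsProjLine L) (hM : IsProjLine M)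
    (hN : IsProjLine N) {p : ProjPlane} (hpL : p ∈ L) (hpM : p ∈ M) (hpN : p ∈ N) :
    d3 (lvec L hL) (lvec M hM) (lvec N hN) = 0 :=
  d3_eq_zero_of_common p.rep_nonzero ((mem_line_iff hL p).mp hpL)
    ((mem_line_iff hM p).mp hpM) ((mem_line_iff hN p).mp hpN)


variable {α : Type*} [DecidableEq α]

lemma card_four {a b c d : α} (h1 : a ≠ b) (h2 : a ≠ c) (h3 : a ≠ d)
    (h4 : b ≠ c) (h5 : b ≠ d) (h6 : c ≠ d) : ({a, b, c, d} : Finset α).card = 4 := by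
  rw [Finset.card_insert_of_notMem (by simp [h1, h2, h3]),
    Finset.card_insert_of_notMem (by simp [h4, h5]),
    Finset.card_insert_of_notMem (by simp [h6]), Finset.card_singleton]

lemma eq_four_set {S : Finset α} {a b c d : α} (hcard : S.card = 4)
    (ha : a ∈ S) (hb : b ∈ S) (hc : c ∈ S) (hd : d ∈ S)
    (h1 : a ≠ b) (h2 : a ≠ c) (h3 : a ≠ d) (h4 : b ≠ c) (h5 : b ≠ d) (h6 : c ≠ d) :
    S = {a, b, c, d} :=
  (Finset.eq_of_subset_of_card_le
    (fun x hx => by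
      simp only [Finset.mem_insert, Finset.mem_singleton] at hx
      rcases hx with rfl | rfl | rfl | rfl <;> assumption)
    (by rw [hcard, card_four h1 h2 h3 h4 h5 h6])).symm

lemma mem_four {S : Finset α} {a b c d : α} (hS : S = {a, b, c, d}) :
    ∀ u ∈ S, u = a ∨ u = b ∨ u = c ∨ u = d := fun u hu => by
  rw [hS] at hu; simpa using hu

section Latin
variable {R Cc S : Finset α} {M : α → α → α}
variable (hScard : S.card = 4) (hCcard : Cc.card = 4)
  (hMS : ∀ r ∈ R, ∀ c ∈ Cc, M r c ∈ S)
  (rowinj : ∀ r ∈ R, ∀ c ∈ Cc, ∀ c' ∈ Cc, M r c = M r c' → c = c')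
  (colinj : ∀ r ∈ R, ∀ r' ∈ R, ∀ c ∈ Cc, M r c = M r' c → r = r')

/-- Core sub-step for the symmetric-matching lemma for order-4 Latin squares. -/
lemma latinSub
    (hScard : S.card = 4)
    (hMS : ∀ r ∈ R, ∀ c ∈ Cc, M r c ∈ S)
    (rowinj : ∀ r ∈ R, ∀ c ∈ Cc, ∀ c' ∈ Cc, M r c = M r c' → c = c')
    (colinj : ∀ r ∈ R, ∀ r' ∈ R, ∀ c ∈ Cc, M r c = M r' c → r = r')
    {r4 rx ry rz c4 cx cy cz : α}
    (hr4 : r4 ∈ R) (hrx : rx ∈ R) (hry : ry ∈ R) (hrz : rz ∈ R)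
    (hc4 : c4 ∈ Cc) (hcx : cx ∈ Cc) (hcy : cy ∈ Cc) (hcz : cz ∈ Cc)
    (hr4x : r4 ≠ rx) (hr4y : r4 ≠ ry) (hr4z : r4 ≠ rz)
    (hrxy : rx ≠ ry) (hrxz : rx ≠ rz) (hryz : ry ≠ rz)
    (hc4x : c4 ≠ cx) (hc4y : c4 ≠ cy) (hc4z : c4 ≠ cz)
    (hcxy : cx ≠ cy) (hcxz : cx ≠ cz) (hcyz : cy ≠ cz)
    (hex : M r4 cx = M rx c4) (hey : M r4 cy = M ry c4) (hez : M r4 cz = M rz c4)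
    (hfx : M rx cx = M rz c4) :
    M rx cy = M r4 c4 ∧ M ry cx = M r4 c4 := by
  set d := M r4 c4 with hd
  set ex := M rx c4 with hex'
  set ey := M ry c4 with hey'
  set ez := M rz c4 with hez'
  -- pairwise distinctness of the four symbols (injectivity in column c4)
  have hdex : d ≠ ex := fun h => hr4x (colinj r4 hr4 rx hrx c4 hc4 h)
  have hdey : d ≠ ey := fun h => hr4y (colinj r4 hr4 ry hry c4 hc4 h)
  have hdez : d ≠ ez := fun h => hr4z (colinj r4 hr4 rz hrz c4 hc4 h)
  have hexey : ex ≠ ey := fun h => hrxy (colinj rx hrx ry hry c4 hc4 h)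
  have hexez : ex ≠ ez := fun h => hrxz (colinj rx hrx rz hrz c4 hc4 h)
  have heyez : ey ≠ ez := fun h => hryz (colinj ry hry rz hrz c4 hc4 h)
  have hSeq : S = {d, ex, ey, ez} :=
    eq_four_set hScard (hMS r4 hr4 c4 hc4) (hMS rx hrx c4 hc4) (hMS ry hry c4 hc4)
      (hMS rz hrz c4 hc4) hdex hdey hdez hexey hexez heyez
  have hScases := mem_four hSeq
  -- step (1): A' = M ry cx = d
  have hA' : M ry cx = d := by
    rcases hScases _ (hMS ry hry cx hcx) with h | h | h | h
    · exact h
    · exact absurd (colinj ry hry r4 hr4 cx hcx (by rw [h, hex])) (Ne.symm hr4y)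
    · exact absurd (rowinj ry hry cx hcx c4 hc4 (by rw [h])) (Ne.symm hc4x)
    · exact absurd (colinj ry hry rx hrx cx hcx (by rw [h, ← hfx])) (Ne.symm hrxy)
  -- step (2): B' = M ry cz = ex
  have hB' : M ry cz = ex := by
    rcases hScases _ (hMS ry hry cz hcz) with h | h | h | h
    · exact absurd (rowinj ry hry cz hcz cx hcx (by rw [h, hA'])) (Ne.symm hcxz)
    · exact h
    · exact absurd (rowinj ry hry cz hcz c4 hc4 (by rw [h])) (Ne.symm hc4z)
    · exact absurd (colinj ry hry r4 hr4 cz hcz (by rw [h, hez])) (Ne.symm hr4y)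
  -- step (3): fy = M ry cy = ez
  have hfy : M ry cy = ez := by
    rcases hScases _ (hMS ry hry cy hcy) with h | h | h | h
    · exact absurd (rowinj ry hry cy hcy cx hcx (by rw [h, hA'])) (Ne.symm hcxy)
    · exact absurd (rowinj ry hry cy hcy cz hcz (by rw [h, hB'])) hcyz
    · exact absurd (rowinj ry hry cy hcy c4 hc4 (by rw [h])) (Ne.symm hc4y)
    · exact h
  -- step (4): A = M rx cy = d
  have hA : M rx cy = d := by
    rcases hScases _ (hMS rx hrx cy hcy) with h | h | h | h
    · exact h
    · exact absurd (rowinj rx hrx cy hcy c4 hc4 (by rw [h])) (Ne.symm hc4y)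
    · exact absurd (colinj rx hrx r4 hr4 cy hcy (by rw [h, hey])) (Ne.symm hr4x)
    · exact absurd (colinj rx hrx ry hry cy hcy (by rw [h, ← hfy])) hrxy
  exact ⟨hA, hA'⟩


/-- The symmetric-matching step: `M rx cy = M ry cx`. -/
lemma latinStep
    (hScard : S.card = 4) (hCcard : Cc.card = 4)
    (hMS : ∀ r ∈ R, ∀ c ∈ Cc, M r c ∈ S)
    (rowinj : ∀ r ∈ R, ∀ c ∈ Cc, ∀ c' ∈ Cc, M r c = M r c' → c = c')
    (colinj : ∀ r ∈ R, ∀ r' ∈ R, ∀ c ∈ Cc, M r c = M r' c → r = r')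
    {r4 rx ry rz c4 cx cy cz : α}
    (hr4 : r4 ∈ R) (hrx : rx ∈ R) (hry : ry ∈ R) (hrz : rz ∈ R)
    (hc4 : c4 ∈ Cc) (hcx : cx ∈ Cc) (hcy : cy ∈ Cc) (hcz : cz ∈ Cc)
    (hr4x : r4 ≠ rx) (hr4y : r4 ≠ ry) (hr4z : r4 ≠ rz)
    (hrxy : rx ≠ ry) (hrxz : rx ≠ rz) (hryz : ry ≠ rz)
    (hc4x : c4 ≠ cx) (hc4y : c4 ≠ cy) (hc4z : c4 ≠ cz)
    (hcxy : cx ≠ cy) (hcxz : cx ≠ cz) (hcyz : cy ≠ cz)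
    (hex : M r4 cx = M rx c4) (hey : M r4 cy = M ry c4) (hez : M r4 cz = M rz c4) :
    M rx cy = M ry cx := by
  by_cases hfx : M rx cx = M rz c4
  · obtain ⟨h1, h2⟩ := latinSub hScard hMS rowinj colinj hr4 hrx hry hrz hc4 hcx hcy hcz
      hr4x hr4y hr4z hrxy hrxz hryz hc4x hc4y hc4z hcxy hcxz hcyz hex hey hez hfx
    rw [h1, h2]
  by_cases hfy : M ry cy = M rz c4
  · obtain ⟨h1, h2⟩ := latinSub hScard hMS rowinj colinj hr4 hry hrx hrz hc4 hcy hcx hcz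
      hr4y hr4x hr4z (Ne.symm hrxy) hryz hrxz hc4y hc4x hc4z (Ne.symm hcxy) hcyz hcxz
      hey hex hez hfy
    rw [h1, h2]
  -- now neither diagonal entry is `ez`
  set d := M r4 c4 with hd
  set ex := M rx c4 with hex'
  set ey := M ry c4 with hey'
  set ez := M rz c4 with hez'
  have hdex : d ≠ ex := fun h => hr4x (colinj r4 hr4 rx hrx c4 hc4 h)
  have hdey : d ≠ ey := fun h => hr4y (colinj r4 hr4 ry hry c4 hc4 h)
  have hdez : d ≠ ez := fun h => hr4z (colinj r4 hr4 rz hrz c4 hc4 h)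
  have hexey : ex ≠ ey := fun h => hrxy (colinj rx hrx ry hry c4 hc4 h)
  have hexez : ex ≠ ez := fun h => hrxz (colinj rx hrx rz hrz c4 hc4 h)
  have heyez : ey ≠ ez := fun h => hryz (colinj ry hry rz hrz c4 hc4 h)
  have hSeq : S = {d, ex, ey, ez} :=
    eq_four_set hScard (hMS r4 hr4 c4 hc4) (hMS rx hrx c4 hc4) (hMS ry hry c4 hc4)
      (hMS rz hrz c4 hc4) hdex hdey hdez hexey hexez heyez
  have hScases := mem_four hSeq
  have hCeq : Cc = {c4, cx, cy, cz} :=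
    eq_four_set hCcard hc4 hcx hcy hcz hc4x hc4y hc4z hcxy hcxz hcyz
  have hCcases := mem_four hCeq
  -- `ez` appears somewhere in row `rx` and in row `ry`
  have hrowx : ∃ c ∈ Cc, M rx c = ez := by
    have himage : ∀ u ∈ S, ∃ c ∈ Cc, M rx c = u := by
      intro u hu
      have h4 : ({M rx c4, M rx cx, M rx cy, M rx cz} : Finset α) = S := by
        refine (eq_four_set hScard (hMS rx hrx c4 hc4) (hMS rx hrx cx hcx)
          (hMS rx hrx cy hcy) (hMS rx hrx cz hcz) ?_ ?_ ?_ ?_ ?_ ?_).symm <;>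
          intro h
        · exact hc4x (rowinj rx hrx c4 hc4 cx hcx h)
        · exact hc4y (rowinj rx hrx c4 hc4 cy hcy h)
        · exact hc4z (rowinj rx hrx c4 hc4 cz hcz h)
        · exact hcxy (rowinj rx hrx cx hcx cy hcy h)
        · exact hcxz (rowinj rx hrx cx hcx cz hcz h)
        · exact hcyz (rowinj rx hrx cy hcy cz hcz h)
      rw [← h4] at hu
      simp only [Finset.mem_insert, Finset.mem_singleton] at hu
      rcases hu with h | h | h | h
      · exact ⟨c4, hc4, h.symm⟩
      · exact ⟨cx, hcx, h.symm⟩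
      · exact ⟨cy, hcy, h.symm⟩
      · exact ⟨cz, hcz, h.symm⟩
    exact himage ez (hMS rz hrz c4 hc4)
  have hrowy : ∃ c ∈ Cc, M ry c = ez := by
    have himage : ∀ u ∈ S, ∃ c ∈ Cc, M ry c = u := by
      intro u hu
      have h4 : ({M ry c4, M ry cx, M ry cy, M ry cz} : Finset α) = S := by
        refine (eq_four_set hScard (hMS ry hry c4 hc4) (hMS ry hry cx hcx)
          (hMS ry hry cy hcy) (hMS ry hry cz hcz) ?_ ?_ ?_ ?_ ?_ ?_).symm <;>
          intro h
        · exact hc4x (rowinj ry hry c4 hc4 cx hcx h)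
        · exact hc4y (rowinj ry hry c4 hc4 cy hcy h)
        · exact hc4z (rowinj ry hry c4 hc4 cz hcz h)
        · exact hcxy (rowinj ry hry cx hcx cy hcy h)
        · exact hcxz (rowinj ry hry cx hcx cz hcz h)
        · exact hcyz (rowinj ry hry cy hcy cz hcz h)
      rw [← h4] at hu
      simp only [Finset.mem_insert, Finset.mem_singleton] at hu
      rcases hu with h | h | h | h
      · exact ⟨c4, hc4, h.symm⟩
      · exact ⟨cx, hcx, h.symm⟩
      · exact ⟨cy, hcy, h.symm⟩
      · exact ⟨cz, hcz, h.symm⟩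
    exact himage ez (hMS rz hrz c4 hc4)
  -- A = M rx cy ∈ {d, ez}, and A ≠ d
  have hA : M rx cy = ez := by
    have hAd : M rx cy ≠ d := by
      intro hAd
      -- then B = M rx cz = ey, and ez does not appear in row rx: contradiction
      have hB : M rx cz = ey := by
        rcases hScases _ (hMS rx hrx cz hcz) with h | h | h | h
        · exact absurd (rowinj rx hrx cz hcz cy hcy (by rw [h, hAd])) (Ne.symm hcyz)
        · exact absurd (rowinj rx hrx cz hcz c4 hc4 (by rw [h])) (Ne.symm hc4z)
        · exact h
        · exact absurd (colinj rx hrx r4 hr4 cz hcz (by rw [h, hez])) (Ne.symm hr4x)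
      obtain ⟨c, hc, hcez⟩ := hrowx
      rcases hCcases c hc with rfl | rfl | rfl | rfl
      · exact hexez (by rw [← hcez])
      · exact hfx hcez
      · exact hdez (by rw [← hAd, hcez])
      · exact heyez (by rw [← hB, hcez])
    rcases hScases _ (hMS rx hrx cy hcy) with h | h | h | h
    · exact absurd h hAd
    · exact absurd (rowinj rx hrx cy hcy c4 hc4 (by rw [h])) (Ne.symm hc4y)
    · exact absurd (colinj rx hrx r4 hr4 cy hcy (by rw [h, hey])) (Ne.symm hr4x)
    · exact h
  have hA' : M ry cx = ez := by
    have hAd : M ry cx ≠ d := by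
      intro hAd
      have hB : M ry cz = ex := by
        rcases hScases _ (hMS ry hry cz hcz) with h | h | h | h
        · exact absurd (rowinj ry hry cz hcz cx hcx (by rw [h, hAd])) (Ne.symm hcxz)
        · exact h
        · exact absurd (rowinj ry hry cz hcz c4 hc4 (by rw [h])) (Ne.symm hc4z)
        · exact absurd (colinj ry hry r4 hr4 cz hcz (by rw [h, hez])) (Ne.symm hr4y)
      obtain ⟨c, hc, hcez⟩ := hrowy
      rcases hCcases c hc with rfl | rfl | rfl | rfl
      · exact heyez (by rw [← hcez])
      · exact hdez (by rw [← hAd, hcez])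
      · exact hfy hcez
      · exact hexez (by rw [← hB, hcez])
    rcases hScases _ (hMS ry hry cx hcx) with h | h | h | h
    · exact absurd h hAd
    · exact absurd (colinj ry hry r4 hr4 cx hcx (by rw [h, hex])) (Ne.symm hr4y)
    · exact absurd (rowinj ry hry cx hcx c4 hc4 (by rw [h])) (Ne.symm hc4x)
    · exact h
  rw [hA, hA']


/-- Main combinatorial lemma: a symmetric matching in an order-4 Latin square. -/
lemma latin4 (hRcard : R.card = 4) (hScard : S.card = 4) (hCcard : Cc.card = 4)
    (hMS : ∀ r ∈ R, ∀ c ∈ Cc, M r c ∈ S)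
    (rowinj : ∀ r ∈ R, ∀ c ∈ Cc, ∀ c' ∈ Cc, M r c = M r c' → c = c')
    (colinj : ∀ r ∈ R, ∀ r' ∈ R, ∀ c ∈ Cc, M r c = M r' c → r = r')
    {r1 r2 r3 : α} (h1 : r1 ∈ R) (h2 : r2 ∈ R) (h3 : r3 ∈ R)
    (h12 : r1 ≠ r2) (h13 : r1 ≠ r3) (h23 : r2 ≠ r3)
    {c4 : α} (hc4 : c4 ∈ Cc) :
    ∃ c1 c2 c3 : α, c1 ∈ Cc ∧ c2 ∈ Cc ∧ c3 ∈ Cc ∧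
      c1 ≠ c4 ∧ c2 ≠ c4 ∧ c3 ≠ c4 ∧ c1 ≠ c2 ∧ c1 ≠ c3 ∧ c2 ≠ c3 ∧
      M r1 c2 = M r2 c1 ∧ M r1 c3 = M r3 c1 ∧ M r2 c3 = M r3 c2 ∧
      M r1 c2 ≠ M r1 c3 ∧ M r1 c2 ≠ M r2 c3 ∧ M r1 c3 ≠ M r2 c3 := by
  -- find the fourth row
  have hnotsub : ¬ R ⊆ {r1, r2, r3} := by
    intro hsub
    have hle := Finset.card_le_card hsub
    have hcard3 : ({r1, r2, r3} : Finset α).card ≤ 3 := by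
      refine le_trans (Finset.card_insert_le _ _) (Nat.add_le_add_right ?_ 1)
      refine le_trans (Finset.card_insert_le _ _) (Nat.add_le_add_right ?_ 1)
      simp
    omega
  obtain ⟨r4, hr4R, hr4n⟩ := Finset.not_subset.mp hnotsub
  simp only [Finset.mem_insert, Finset.mem_singleton, not_or] at hr4n
  obtain ⟨hr41, hr42, hr43⟩ := hr4n
  -- row r4 is surjective onto S
  have hsurj : ∀ s ∈ S, ∃ c ∈ Cc, M r4 c = s := by
    have himg : Finset.image (M r4) Cc = S := by
      refine Finset.eq_of_subset_of_card_le ?_ ?_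
      · intro x hx
        obtain ⟨c, hc, rfl⟩ := Finset.mem_image.mp hx
        exact hMS r4 hr4R c hc
      · rw [hScard, Finset.card_image_of_injOn fun c hc c' hc' h => rowinj r4 hr4R c hc c' hc' h,
          hCcard]
    intro s hs
    rw [← himg] at hs
    obtain ⟨c, hc, hcs⟩ := Finset.mem_image.mp hs
    exact ⟨c, hc, hcs⟩
  obtain ⟨c1, hc1, he1⟩ := hsurj (M r1 c4) (hMS r1 h1 c4 hc4)
  obtain ⟨c2, hc2, he2⟩ := hsurj (M r2 c4) (hMS r2 h2 c4 hc4)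
  obtain ⟨c3, hc3, he3⟩ := hsurj (M r3 c4) (hMS r3 h3 c4 hc4)
  have hc14 : c1 ≠ c4 := fun h => hr41 (colinj r4 hr4R r1 h1 c4 hc4 (by rw [← he1, h]))
  have hc24 : c2 ≠ c4 := fun h => hr42 (colinj r4 hr4R r2 h2 c4 hc4 (by rw [← he2, h]))
  have hc34 : c3 ≠ c4 := fun h => hr43 (colinj r4 hr4R r3 h3 c4 hc4 (by rw [← he3, h]))
  have hc12 : c1 ≠ c2 := by
    intro h
    exact h12 (colinj r1 h1 r2 h2 c4 hc4 (by rw [← he1, ← he2, h]))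
  have hc13 : c1 ≠ c3 := by
    intro h
    exact h13 (colinj r1 h1 r3 h3 c4 hc4 (by rw [← he1, ← he3, h]))
  have hc23 : c2 ≠ c3 := by
    intro h
    exact h23 (colinj r2 h2 r3 h3 c4 hc4 (by rw [← he2, ← he3, h]))
  have hs12 : M r1 c2 = M r2 c1 :=
    latinStep hScard hCcard hMS rowinj colinj hr4R h1 h2 h3 hc4 hc1 hc2 hc3
      hr41 hr42 hr43 h12 h13 h23 (Ne.symm hc14) (Ne.symm hc24) (Ne.symm hc34)
      hc12 hc13 hc23 he1 he2 he3
  have hs13 : M r1 c3 = M r3 c1 :=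
    latinStep hScard hCcard hMS rowinj colinj hr4R h1 h3 h2 hc4 hc1 hc3 hc2
      hr41 hr43 hr42 h13 h12 (Ne.symm h23) (Ne.symm hc14) (Ne.symm hc34) (Ne.symm hc24)
      hc13 hc12 (Ne.symm hc23) he1 he3 he2
  have hs23 : M r2 c3 = M r3 c2 :=
    latinStep hScard hCcard hMS rowinj colinj hr4R h2 h3 h1 hc4 hc2 hc3 hc1
      hr42 hr43 hr41 h23 (Ne.symm h12) (Ne.symm h13) (Ne.symm hc24) (Ne.symm hc34)
      (Ne.symm hc14) hc23 (Ne.symm hc12) (Ne.symm hc13) he2 he3 he1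
  refine ⟨c1, c2, c3, hc1, hc2, hc3, hc14, hc24, hc34, hc12, hc13, hc23, hs12, hs13, hs23,
    ?_, ?_, ?_⟩
  · intro h
    exact hc23 (rowinj r1 h1 c2 hc2 c3 hc3 h)
  · intro h
    rw [hs12] at h
    exact hc13 (rowinj r2 h2 c1 hc1 c3 hc3 h)
  · intro h
    exact h12 (colinj r1 h1 r2 h2 c3 hc3 h)

end Latin


/-- The heart of the matter: in a (3,4)-net, if classes `i` and `j` have concurrent
triples, then so does class `k`. -/
lemma third {A : Finset (Set ProjPlane)} {C : Fin 3 → Finset (Set ProjPlane)}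
    (hA : IsNet 3 4 A C) {i j k : Fin 3} (hij : i ≠ j) (hik : i ≠ k) (hjk : j ≠ k)
    (hi : HasConcurrentTriple (C i)) (hj : HasConcurrentTriple (C j)) :
    HasConcurrentTriple (C k) := by
  obtain ⟨hlines, hAcard, hCcard, hdisj, hsub, hcover, hnet⟩ := hA
  have hlineC : ∀ {m : Fin 3} {L : Set ProjPlane}, L ∈ C m → IsProjLine L :=
    fun h => hlines _ (hsub _ h)
  have hdiff : ∀ {m m' : Fin 3}, m ≠ m' → ∀ {L K : Set ProjPlane},
      L ∈ C m → K ∈ C m' → L ≠ K := by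
    intro m m' hmm' L K hL hK hLK
    exact Finset.disjoint_left.mp (hdisj m m' hmm') hL (hLK.symm ▸ hK)
  obtain ⟨L1, hL1, L2, hL2, L3, hL3, h12, h13, h23, P, hP1, hP2, hP3⟩ := hi
  obtain ⟨K1, hK1, K2, hK2, K3, hK3, g12, g13, g23, Q, hQ1, hQ2, hQ3⟩ := hj
  -- the fourth line of class j
  have hnotsub : ¬ C j ⊆ {K1, K2, K3} := by
    intro hsub'
    have hle := Finset.card_le_card hsub'
    have hcard3 : ({K1, K2, K3} : Finset (Set ProjPlane)).card ≤ 3 := by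
      refine le_trans (Finset.card_insert_le _ _) (Nat.add_le_add_right ?_ 1)
      refine le_trans (Finset.card_insert_le _ _) (Nat.add_le_add_right ?_ 1)
      simp
    rw [hCcard j] at hle
    omega
  obtain ⟨c4, hc4j, hc4n⟩ := Finset.not_subset.mp hnotsub
  simp only [Finset.mem_insert, Finset.mem_singleton, not_or] at hc4n
  obtain ⟨hc4K1, hc4K2, hc4K3⟩ := hc4n
  -- the Latin-square function
  have hMex : ∀ L K : Set ProjPlane, ∃ N : Set ProjPlane, L ∈ C i → K ∈ C j →
      (N ∈ C k ∧ ∃ p : ProjPlane, p ∈ L ∧ p ∈ K ∧ p ∈ N) ∧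
      (∀ N' : Set ProjPlane, ∀ p' : ProjPlane,
        N' ∈ C k → p' ∈ L → p' ∈ K → p' ∈ N' → N' = N) := by
    intro L K
    by_cases h : L ∈ C i ∧ K ∈ C j
    · obtain ⟨p, hpL, hpK⟩ := exists_common_point (hlineC h.1) (hlineC h.2)
      obtain ⟨N, ⟨hNk, hpN⟩, huniq⟩ := hnet i j hij L h.1 K h.2 p hpL hpK k
      refine ⟨N, fun _ _ => ⟨⟨hNk, p, hpL, hpK, hpN⟩, ?_⟩⟩
      intro N' p' hN' hp'L hp'K hp'N'
      have hpp' : p' = p :=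
        point_unique (hlineC h.1) (hlineC h.2) (hdiff hij h.1 h.2) hp'L hp'K hpL hpK
      exact huniq N' ⟨hN', hpp' ▸ hp'N'⟩
    · exact ⟨L, fun hL hK => absurd ⟨hL, hK⟩ h⟩
  choose Mf hMf using hMex
  have hMmem : ∀ L ∈ C i, ∀ K ∈ C j, Mf L K ∈ C k :=
    fun L hL K hK => ((hMf L K hL hK).1).1
  have hMpt : ∀ L ∈ C i, ∀ K ∈ C j, ∃ p : ProjPlane, p ∈ L ∧ p ∈ K ∧ p ∈ Mf L K :=
    fun L hL K hK => ((hMf L K hL hK).1).2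
  have hMuniq : ∀ L ∈ C i, ∀ K ∈ C j, ∀ N' : Set ProjPlane, ∀ p' : ProjPlane,
      N' ∈ C k → p' ∈ L → p' ∈ K → p' ∈ N' → N' = Mf L K :=
    fun L hL K hK => (hMf L K hL hK).2
  -- row injectivity
  have rowinj : ∀ L ∈ C i, ∀ K ∈ C j, ∀ K' ∈ C j, Mf L K = Mf L K' → K = K' := by
    intro L hL K hK K' hK' hMM
    obtain ⟨p, hpL, hpK, hpN⟩ := hMpt L hL K hK
    obtain ⟨p', hp'L, hp'K', hp'N⟩ := hMpt L hL K' hK'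
    rw [← hMM] at hp'N
    have hLN : L ≠ Mf L K := hdiff hik hL (hMmem L hL K hK)
    have hpp' : p = p' := point_unique (hlineC hL) (hlineC (hMmem L hL K hK)) hLN
      hpL hpN hp'L hp'N
    obtain ⟨J, hJ, huniqJ⟩ := hnet i j hij L hL K hK p hpL hpK j
    have e1 : K = J := huniqJ K ⟨hK, hpK⟩
    have e2 : K' = J := huniqJ K' ⟨hK', hpp' ▸ hp'K'⟩
    rw [e1, e2]
  -- column injectivity
  have colinj : ∀ L ∈ C i, ∀ L' ∈ C i, ∀ K ∈ C j, Mf L K = Mf L' K → L = L' := by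
    intro L hL L' hL' K hK hMM
    obtain ⟨p, hpL, hpK, hpN⟩ := hMpt L hL K hK
    obtain ⟨p', hp'L', hp'K, hp'N⟩ := hMpt L' hL' K hK
    rw [← hMM] at hp'N
    have hKN : K ≠ Mf L K := hdiff hjk hK (hMmem L hL K hK)
    have hpp' : p = p' := point_unique (hlineC hK) (hlineC (hMmem L hL K hK)) hKN
      hpK hpN hp'K hp'N
    obtain ⟨I, hI, huniqI⟩ := hnet i j hij L hL K hK p hpL hpK i
    have e1 : L = I := huniqI L ⟨hL, hpL⟩
    have e2 : L' = I := huniqI L' ⟨hL', hpp' ▸ hp'L'⟩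
    rw [e1, e2]
  -- the symmetric matching
  obtain ⟨J1, J2, J3, hJ1, hJ2, hJ3, hJ14, hJ24, hJ34, hJ12, hJ13, hJ23,
    hs12, hs13, hs23, hd1, hd2, hd3g⟩ :=
    latin4 (hCcard i) (hCcard k) (hCcard j) hMmem rowinj colinj hL1 hL2 hL3
      h12 h13 h23 hc4j
  -- each J_b is one of K1, K2, K3, hence passes through Q
  have hCjeq : C j = {K1, K2, K3, c4} :=
    eq_four_set (hCcard j) hK1 hK2 hK3 hc4j g12 g13 (Ne.symm hc4K1) g23 (Ne.symm hc4K2)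
      (Ne.symm hc4K3)
  have hQJ : ∀ {Jb : Set ProjPlane}, Jb ∈ C j → Jb ≠ c4 → Q ∈ Jb := by
    intro Jb hJb hJbne
    rcases mem_four hCjeq Jb hJb with rfl | rfl | rfl | rfl
    · exact hQ1
    · exact hQ2
    · exact hQ3
    · exact absurd rfl hJbne
  have hQJ1 : Q ∈ J1 := hQJ hJ1 hJ14
  have hQJ2 : Q ∈ J2 := hQJ hJ2 hJ24
  have hQJ3 : Q ∈ J3 := hQJ hJ3 hJ34
  -- the three candidate lines of class k
  set N1 := Mf L2 J3 with hN1def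
  set N2 := Mf L1 J3 with hN2def
  set N3 := Mf L1 J2 with hN3def
  have hN1k : N1 ∈ C k := hMmem L2 hL2 J3 hJ3
  have hN2k : N2 ∈ C k := hMmem L1 hL1 J3 hJ3
  have hN3k : N3 ∈ C k := hMmem L1 hL1 J2 hJ2
  -- line functionals
  have hprL1 : IsProjLine L1 := hlineC hL1
  have hprL2 : IsProjLine L2 := hlineC hL2
  have hprL3 : IsProjLine L3 := hlineC hL3
  have hprJ1 : IsProjLine J1 := hlineC hJ1
  have hprJ2 : IsProjLine J2 := hlineC hJ2
  have hprJ3 : IsProjLine J3 := hlineC hJ3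
  have hprN1 : IsProjLine N1 := hlineC hN1k
  have hprN2 : IsProjLine N2 := hlineC hN2k
  have hprN3 : IsProjLine N3 := hlineC hN3k
  -- triple products vanish for concurrent lines
  have hdl : d3 (lvec L1 hprL1) (lvec L2 hprL2) (lvec L3 hprL3) = 0 :=
    d3_lvec_zero hprL1 hprL2 hprL3 hP1 hP2 hP3
  have hdk : d3 (lvec J1 hprJ1) (lvec J2 hprJ2) (lvec J3 hprJ3) = 0 :=
    d3_lvec_zero hprJ1 hprJ2 hprJ3 hQJ1 hQJ2 hQJ3
  have hD := pappus (cr_lvec_ne hprL1 hprL2 h12) (cr_lvec_ne hprJ1 hprJ2 (fun h =>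
    hJ12 h)) hdl hdk
  -- a tool: the coefficient vector of `Mf La Jb` is a multiple of `cr la kb`
  have key : ∀ (La Jb : Set ProjPlane) (hLa : La ∈ C i) (hJb : Jb ∈ C j)
      (hprLa : IsProjLine La) (hprJb : IsProjLine Jb)
      (N : Set ProjPlane) (hprN : IsProjLine N) (hMab : Mf La Jb = N)
      (La' Jb' : Set ProjPlane) (hLa' : La' ∈ C i) (hJb' : Jb' ∈ C j)
      (hprLa' : IsProjLine La') (hprJb' : IsProjLine Jb')
      (hMab' : Mf La' Jb' = N) (hLaa' : La ≠ La'),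
      ∃ c : ℂ, lvec N hprN = c • cr (cr (lvec La hprLa) (lvec Jb hprJb))
        (cr (lvec La' hprLa') (lvec Jb' hprJb')) := by
    intro La Jb hLa hJb hprLa hprJb N hprN hMab La' Jb' hLa' hJb' hprLa' hprJb' hMab' hLaa'
    obtain ⟨p, hpL, hpK, hpN⟩ := hMpt La hLa Jb hJb
    obtain ⟨p', hp'L, hp'K, hp'N⟩ := hMpt La' hLa' Jb' hJb'
    rw [hMab] at hpN
    rw [hMab'] at hp'N
    have hpp' : p ≠ p' := by
      rintro rfl
      obtain ⟨I, hI, huniqI⟩ := hnet i j hij La hLa Jb hJb p hpL hpK i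
      exact hLaa' ((huniqI La ⟨hLa, hpL⟩).trans (huniqI La' ⟨hLa', hp'L⟩).symm)
    obtain ⟨s, hsne, hs⟩ := rep_eq_smul_cr hprLa hprJb
      (cr_lvec_ne _ _ (hdiff hij hLa hJb)) hpL hpK
    obtain ⟨s', hs'ne, hs'⟩ := rep_eq_smul_cr hprLa' hprJb'
      (cr_lvec_ne _ _ (hdiff hij hLa' hJb')) hp'L hp'K
    obtain ⟨t, ht⟩ := eq_smul_cr_of_perp (cr_rep_ne hpp')
      ((mem_line_iff hprN p).mp hpN) ((mem_line_iff hprN p').mp hp'N)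
    refine ⟨t * (s * s'), ?_⟩
    rw [ht, hs, hs', cr_smul_left, cr_smul_right, smul_smul, smul_smul, mul_assoc]
  obtain ⟨a1, ha1⟩ :=
    key L2 J3 hL2 hJ3 hprL2 hprJ3 N1 hprN1 rfl L3 J2 hL3 hJ2 hprL3 hprJ2 hs23.symm h23
  obtain ⟨a2, ha2⟩ :=
    key L1 J3 hL1 hJ3 hprL1 hprJ3 N2 hprN2 rfl L3 J1 hL3 hJ1 hprL3 hprJ1 hs13.symm h13
  obtain ⟨a3, ha3⟩ :=
    key L1 J2 hL1 hJ2 hprL1 hprJ2 N3 hprN3 rfl L2 J1 hL2 hJ1 hprL2 hprJ1 hs12.symm h12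
  have hdn : d3 (lvec N1 hprN1) (lvec N2 hprN2) (lvec N3 hprN3) = 0 := by
    rw [ha1, ha2, ha3, d3_smul₁, d3_smul₂, d3_smul₃, hD, mul_zero, mul_zero, mul_zero]
  -- distinctness of the three lines
  have hN32 : N3 ≠ N2 := hd1
  have hN31 : N3 ≠ N1 := hd2
  have hN21 : N2 ≠ N1 := hd3g
  -- common point
  have hcrn : cr (lvec N1 hprN1) (lvec N2 hprN2) ≠ 0 :=
    cr_lvec_ne hprN1 hprN2 (Ne.symm hN21)
  refine ⟨N1, hN1k, N2, hN2k, N3, hN3k, Ne.symm hN21, Ne.symm hN31, Ne.symm hN32,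
    Projectivization.mk ℂ _ hcrn, mem_line_mk hprN1 hcrn (dt_self_cr _ _),
    mem_line_mk hprN2 hcrn (dt_self_cr' _ _), mem_line_mk hprN3 hcrn ?_⟩
  exact (d3_cyc (lvec N1 hprN1) (lvec N2 hprN2) (lvec N3 hprN3)).symm.trans hdn

end S6

/-- In a (3,4)-net with only double and triple points, if two of the classes
contain a triple of concurrent lines, then so does the third. -/
theorem statement6 (A : Finset (Set ProjPlane)) (C : Fin 3 → Finset (Set ProjPlane))
    (hA : IsNet 3 4 A C)
    (hmult : ∀ p : ProjPlane, IsMultPoint A p → mult A p = 2 ∨ mult A p = 3)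
    (i j : Fin 3) (hij : i ≠ j)
    (hi : HasConcurrentTriple (C i)) (hj : HasConcurrentTriple (C j)) :
    ∀ k : Fin 3, HasConcurrentTriple (C k) := by
  intro k
  by_cases hki : k = i
  · exact hki ▸ hi
  by_cases hkj : k = j
  · exact hkj ▸ hj
  exact S6.third hA hij (fun h => hki h.symm) (fun h => hkj h.symm) hi hj
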